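/- Let φ be a solution of EQ_{λ,n,q} on (0,∞) and let b > 0 be a first zero of φ, i.e., φ(t) > 0 for all t ∈ (0,b) and φ(b) = 0. Then φ'(b) < 0, and consequently the energy satisfies E(b) = (1/2)·φ'(b)² > 0. -/

import Mathlib

open Real Set

/-- At a first zero b of a solution φ of EQ_{λ,n,q} (φ > 0 on (0,b), φ(b) = 0),
one has φ'(b) < 0 and the energy satisfies E(b) = (1/2)φ'(b)² > 0. -/
theorem first_zero_negative_slope
    (n : ℕ) (hn : 2 ≤ n) (lam q : ℝ) (hq : 1 < q)
    (φ φ' φ'' : ℝ → ℝ)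
    (hd1 : ∀ t ∈ Ioi (0:ℝ), HasDerivAt φ (φ' t) t)
    (hd2 : ∀ t ∈ Ioi (0:ℝ), HasDerivAt φ' (φ'' t) t)
    (hode : ∀ t ∈ Ioi (0:ℝ),
      φ'' t + ((n : ℝ) - 1) * ((exp (2*t) + 1) / (exp (2*t) - 1)) * φ' t
        = lam * φ t - |φ t| ^ (q - 1) * φ t)
    (E : ℝ → ℝ)
    (hE : ∀ t, E t = (1/2) * (φ' t)^2 - (lam/2) * (φ t)^2 + |φ t| ^ (q + 1) / (q + 1))
    (b : ℝ) (hb : 0 < b) (hpos : ∀ t ∈ Ioo (0:ℝ) b, 0 < φ t) (hzero : φ b = 0) :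
    φ' b < 0 ∧ E b = (1/2) * (φ' b)^2 ∧ 0 < E b := by
  -- Step 1: φ' b ≤ 0
  have hle : φ' b ≤ 0 := by
    have hslope : Filter.Tendsto (slope φ b) (nhdsWithin b {b}ᶜ) (nhds (φ' b)) :=
      hasDerivAt_iff_tendsto_slope.1 (hd1 b hb)
    have hsub : nhdsWithin b (Iio b) ≤ nhdsWithin b {b}ᶜ :=
      nhdsWithin_mono _ (fun x hx => ne_of_lt hx)
    refine le_of_tendsto (hslope.mono_left hsub) ?_
    have hmem : Ioo 0 b ∈ nhdsWithin b (Iio b) :=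
      Ioo_mem_nhdsLT_of_mem ⟨hb, le_refl b⟩
    filter_upwards [hmem] with t ht
    have h1 : 0 < φ t := hpos t ht
    have h2 : t - b < 0 := by linarith [ht.2]
    rw [slope_def_field]
    exact div_nonpos_of_nonneg_of_nonpos (by rw [hzero]; linarith) (le_of_lt h2)
  -- Step 2: φ' b ≠ 0 via Grönwall
  have hne : φ' b ≠ 0 := by
    intro h0
    -- continuity: find a < b with |φ| ≤ 1 on [a,b]
    have hc : ContinuousAt φ b := (hd1 b hb).continuousAt
    obtain ⟨δ, hδpos, hδ⟩ := Metric.continuousAt_iff.1 hc 1 one_pos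
    set a : ℝ := max (b/2) (b - δ/2) with ha_def
    have ha0 : 0 < a := lt_of_lt_of_le (by linarith) (le_max_left _ _)
    have hab : a < b := by
      apply max_lt <;> linarith
    have hφsmall : ∀ t ∈ Icc a b, |φ t| ≤ 1 := by
      intro t ht
      have h1 : b - δ/2 ≤ t := le_trans (le_max_right _ _) ht.1
      have h2 : dist t b < δ := by
        rw [Real.dist_eq, abs_lt]; constructor <;> [linarith [ht.1]; linarith [ht.2]]
      have := hδ h2
      rw [Real.dist_eq, hzero, sub_zero] at this
      exact le_of_lt this
    -- bound on the coefficient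
    have hexpa : (0:ℝ) < exp (2*a) - 1 := by
      have : (1:ℝ) < exp (2*a) := by
        rw [show (1:ℝ) = exp 0 by simp]; exact exp_lt_exp.2 (by linarith)
      linarith
    set C : ℝ := ((n:ℝ) - 1) * ((exp (2*a) + 1) / (exp (2*a) - 1)) with hC_def
    have hn1 : (1:ℝ) ≤ (n:ℝ) - 1 := by
      have : (2:ℝ) ≤ (n:ℝ) := by exact_mod_cast hn
      linarith
    have hCoef : ∀ t ∈ Icc a b,
        ((n:ℝ) - 1) * ((exp (2*t) + 1) / (exp (2*t) - 1)) ≤ C := by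
      intro t ht
      have hexpt : (0:ℝ) < exp (2*t) - 1 := by
        have : (1:ℝ) < exp (2*t) := by
          rw [show (1:ℝ) = exp 0 by simp]; exact exp_lt_exp.2 (by linarith [ht.1, ha0])
        linarith
      have hee : exp (2*a) ≤ exp (2*t) := exp_le_exp.2 (by linarith [ht.1])
      have hfrac : (exp (2*t) + 1) / (exp (2*t) - 1) ≤ (exp (2*a) + 1) / (exp (2*a) - 1) := by
        rw [div_le_div_iff₀ hexpt hexpa]
        nlinarith
      exact mul_le_mul_of_nonneg_left hfrac (by linarith)
    have hCpos : 0 < C := by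
      apply mul_pos (by linarith)
      positivity
    set K : ℝ := C + |lam| + 1 with hK_def
    have hK1 : 1 ≤ K := by
      have := abs_nonneg lam
      linarith
    -- the vector function
    set f : ℝ → ℝ × ℝ := fun s => (φ (b - s), φ' (b - s)) with hf_def
    set f' : ℝ → ℝ × ℝ := fun s => (-φ' (b - s), -φ'' (b - s)) with hf'_def
    have hfd : ∀ s ∈ Icc (0:ℝ) (b - a), HasDerivAt f (f' s) s := by
      intro s hs
      have hts : 0 < b - s := by
        have := hs.2; have := ha0; linarith
      have hneg : HasDerivAt (fun x : ℝ => b - x) (-1) s := (hasDerivAt_id s).const_sub b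
      have h1 : HasDerivAt (fun x => φ (b - x)) (φ' (b - s) * (-1)) s :=
        (hd1 (b - s) hts).comp s hneg
      have h2 : HasDerivAt (fun x => φ' (b - x)) (φ'' (b - s) * (-1)) s :=
        (hd2 (b - s) hts).comp s hneg
      have := h1.prodMk h2
      simpa [hf_def, hf'_def, mul_comm] using this
    -- Grönwall
    have hgron : ∀ s ∈ Icc (0:ℝ) (b - a), ‖f s‖ ≤ gronwallBound 0 K 0 (s - 0) := by
      apply norm_le_gronwallBound_of_norm_deriv_right_le
      · exact fun s hs => (hfd s hs).continuousAt.continuousWithinAt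
      · exact fun s hs => (hfd s (Ico_subset_Icc_self hs)).hasDerivWithinAt
      · simp [hf_def, hzero, h0, Prod.norm_def]
      · intro s hs
        have hsa : b - s ∈ Icc a b := by
          constructor
          · linarith [hs.2]
          · linarith [hs.1]
        have hts : (0:ℝ) < b - s := by linarith [hsa.1, ha0]
        set t := b - s with ht_def
        have hode' := hode t hts
        have hsm : |φ t| ≤ 1 := hφsmall t hsa
        have hrp : |φ t| ^ (q - 1) ≤ 1 :=
          Real.rpow_le_one (abs_nonneg _) hsm (by linarith)
        have hrp0 : 0 ≤ |φ t| ^ (q - 1) := Real.rpow_nonneg (abs_nonneg _) _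
        have hcoef := hCoef t hsa
        have hcoef0 : 0 ≤ ((n:ℝ) - 1) * ((exp (2*t) + 1) / (exp (2*t) - 1)) := by
          have hexpt : (0:ℝ) < exp (2*t) - 1 := by
            have : (1:ℝ) < exp (2*t) := by
              rw [show (1:ℝ) = exp 0 by simp]; exact exp_lt_exp.2 (by linarith [hsa.1])
            linarith
          apply mul_nonneg (by linarith)
          positivity
        -- norms
        have hnf : ‖f s‖ = max |φ t| |φ' t| := by
          simp [hf_def, Prod.norm_def, Real.norm_eq_abs, ht_def]
        have hnf' : ‖f' s‖ = max |φ' t| |φ'' t| := by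
          simp [hf'_def, Prod.norm_def, Real.norm_eq_abs, ht_def]
        rw [hnf, hnf', add_zero]
        set M := max |φ t| |φ' t| with hM_def
        have hM0 : 0 ≤ M := le_trans (abs_nonneg _) (le_max_left _ _)
        have hMφ : |φ t| ≤ M := le_max_left _ _
        have hMφ' : |φ' t| ≤ M := le_max_right _ _
        have hbound2 : |φ'' t| ≤ K * M := by
          set A := lam * φ t with hA
          set B := |φ t| ^ (q - 1) * φ t with hB
          set D := ((n:ℝ) - 1) * ((exp (2*t) + 1) / (exp (2*t) - 1)) * φ' t with hD
          have heq : φ'' t = A - B - D := by linarith [hode']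
          rw [heq]
          have h4 : abs (A - B - D) ≤ abs A + abs B + abs D := by
            calc abs (A - B - D) = abs (A + -B + -D) := by ring_nf
              _ ≤ abs A + abs (-B) + abs (-D) := abs_add_three _ _ _
              _ = abs A + abs B + abs D := by rw [abs_neg, abs_neg]
          refine h4.trans ?_
          have e1 : abs A ≤ |lam| * M := by
            rw [hA, abs_mul]; exact mul_le_mul_of_nonneg_left hMφ (abs_nonneg _)
          have e2 : abs B ≤ 1 * M := by
            rw [hB, abs_mul, abs_of_nonneg hrp0]
            exact mul_le_mul hrp hMφ (abs_nonneg _) one_pos.le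
          have e3 : abs D ≤ C * M := by
            rw [hD, abs_mul, abs_of_nonneg hcoef0]
            exact mul_le_mul hcoef hMφ' (abs_nonneg _) (le_of_lt hCpos)
          calc abs A + abs B + abs D ≤ |lam| * M + 1 * M + C * M := by
                exact add_le_add (add_le_add e1 e2) e3
            _ = (C + |lam| + 1) * M := by ring
            _ = K * M := by rw [hK_def]
        have hbound1 : |φ' t| ≤ K * M := le_trans hMφ' (le_mul_of_one_le_left hM0 hK1)
        exact max_le hbound1 hbound2
    -- contradiction at s = (b-a)/2
    have hs_mem : (b - a)/2 ∈ Icc (0:ℝ) (b - a) := by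
      constructor <;> linarith
    have := hgron ((b - a)/2) hs_mem
    rw [gronwallBound_ε0_δ0] at this
    have hfz : f ((b - a)/2) = 0 := by
      have h := le_antisymm this (norm_nonneg _)
      exact norm_eq_zero.1 h
    have hφz : φ (b - (b - a)/2) = 0 := by
      have := congrArg Prod.fst hfz
      simpa [hf_def] using this
    have hmem : b - (b - a)/2 ∈ Ioo (0:ℝ) b := by
      constructor <;> [linarith; linarith]
    exact absurd hφz (ne_of_gt (hpos _ hmem))
  have hlt : φ' b < 0 := lt_of_le_of_ne hle hne
  refine ⟨hlt, ?_, ?_⟩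
  · rw [hE b, hzero]
    rw [abs_zero, Real.zero_rpow (ne_of_gt (by linarith : (0:ℝ) < q + 1))]
    ring
  · rw [hE b, hzero, abs_zero, Real.zero_rpow (ne_of_gt (by linarith : (0:ℝ) < q + 1))]
    have h2 : 0 < φ' b ^ 2 := by nlinarith
    norm_num
    linarith
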